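/- Let n be a positive integer divisible by 6. For all (x,k), (y,l) ∈ P_{1,n}: (1/6)·d_∞(φ_{1,n}(x,k), φ_{1,n}(y,l)) − 2 ≤ ρ((x,k),(y,l)) ≤ 2·d_∞(φ_{1,n}(x,k), φ_{1,n}(y,l)) + 2. Consequently, the bijections φ_{1,n} : (P_{1,n}, ρ) → (W_n, d_∞) have distortions bounded by a constant independent of n. -/

import Mathlib

open scoped symmDiff

/-- Elements of the lamplighter group `Z₂ ≀ Z_n`: a set of lit lamps and a position. -/
abbrev Lamp (n : ℕ) := Set (ZMod n) × ZMod n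

/-- Group multiplication `(x,g)·(y,h) = (x △ (g+y), g+h)`. -/
def lampMul {n : ℕ} (u v : Lamp n) : Lamp n :=
  (u.1 ∆ ((u.2 + ·) '' v.1), u.2 + v.2)

/-- Group inverse in the lamplighter group. -/
def lampInv {n : ℕ} (u : Lamp n) : Lamp n :=
  ((· - u.2) '' u.1, -u.2)

/-- The generator `t = (∅, 1)`. -/
def lampT (n : ℕ) : Lamp n := (∅, 1)

/-- The generator `a = ({0}, 0)`. -/
def lampA (n : ℕ) : Lamp n := ({0}, 0)

/-- The generator `ta`. -/
def lampTA (n : ℕ) : Lamp n := lampMul (lampT n) (lampA n)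

/-- Word metric w.r.t. a generating set `S`: the least `m` such that `u⁻¹v`
is a product of `m` elements of `S ∪ S⁻¹`, i.e. `v = u·s₁⋯s_m`. -/
noncomputable def wordDist {n : ℕ} (S : Set (Lamp n)) (u v : Lamp n) : ℕ :=
  sInf {m | ∃ w : List (Lamp n), w.length = m ∧
    (∀ s ∈ w, s ∈ S ∨ ∃ g ∈ S, s = lampInv g) ∧ v = w.foldl lampMul u}

/-- The word metric `ρ` on `Z₂ ≀ Z_n` w.r.t. the generating set `{t, ta}`. -/
noncomputable def lampDist (n : ℕ) (u v : Lamp n) : ℕ :=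
  wordDist {lampT n, lampTA n} u v

/-- Length of the longest common prefix of two vertices of the binary tree. -/
def lgc : List Bool → List Bool → ℕ
  | a :: as, b :: bs => if a = b then lgc as bs + 1 else 0
  | _, _ => 0

/-- Graph distance in the binary tree (vertices = `{0,1}`-sequences). -/
def treeDist (A B : List Bool) : ℕ := A.length + B.length - 2 * lgc A B

/-- The arc `{a, a+1, ..., a+m}` in `Z_n`. -/
def arcSet (n : ℕ) (a : ZMod n) (m : ℕ) : Set (ZMod n) :=
  {z | ∃ i ≤ m, z = a + (i : ZMod n)}

/-- The arc `P₁ = {n/6, ..., 5n/6}` of `Z_n` (identified with `{0,...,n-1}` via `val`). -/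
def P1set (n : ℕ) : Set (ZMod n) := {z | n / 6 ≤ z.val ∧ z.val ≤ 5 * n / 6}

/-- The subset `P_{1,n} = {(x,k) ∈ G_n : k ∈ P₁}`. -/
def lampP1 (n : ℕ) : Set (Lamp n) := {u | u.2 ∈ P1set n}

/-- The set `W_n ⊆ T_n × T_n`. -/
def Wset (n : ℕ) : Set (List Bool × List Bool) :=
  {p | p.1.length + p.2.length = n ∧ n / 6 ≤ p.1.length ∧ p.1.length ≤ 5 * n / 6}

open Classical in
/-- The map `φ_{1,n} : P_{1,n} → W_n`. -/
noncomputable def phi1 (n : ℕ) (u : Lamp n) : List Bool × List Bool :=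
  ((List.range u.2.val).map fun j => if ((j : ℕ) : ZMod n) ∈ u.1 then true else false,
   (List.range (n - u.2.val)).map fun i => if ((n - 1 - i : ℕ) : ZMod n) ∈ u.1 then true else false)

/-- "X admits an equivalent uniformly convex norm" (= superreflexivity, by Enflo). -/
def HasEquivUnifConvexNorm (X : Type*) [NormedAddCommGroup X] [NormedSpace ℝ X] : Prop :=
  ∃ N : X → ℝ,
    (∀ x, N x = 0 ↔ x = 0) ∧
    (∀ (c : ℝ) (x : X), N (c • x) = |c| * N x) ∧
    (∀ x y, N (x + y) ≤ N x + N y) ∧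
    (∃ c₁ > (0 : ℝ), ∃ c₂ > (0 : ℝ), ∀ x, c₁ * ‖x‖ ≤ N x ∧ N x ≤ c₂ * ‖x‖) ∧
    (∀ ε > (0 : ℝ), ∃ δ > (0 : ℝ), ∀ x y,
      N x ≤ 1 → N y ≤ 1 → ε ≤ N (x - y) → N (x + y) ≤ 2 - δ)


/-! lgc lemmas -/

theorem lgc_le_left : ∀ A B : List Bool, lgc A B ≤ A.length
  | a :: as, b :: bs => by
    unfold lgc; split
    · simpa using lgc_le_left as bs
    · simp
  | [], _ => by simp [lgc]
  | _ :: _, [] => by simp [lgc]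

theorem lgc_le_right : ∀ A B : List Bool, lgc A B ≤ B.length
  | a :: as, b :: bs => by
    unfold lgc; split
    · simpa using lgc_le_right as bs
    · simp
  | [], _ => by simp [lgc]
  | _ :: _, [] => by simp [lgc]

theorem lgc_comm : ∀ A B : List Bool, lgc A B = lgc B A
  | a :: as, b :: bs => by
    unfold lgc
    rcases eq_or_ne a b with h | h
    · simp [h, lgc_comm as bs]
    · simp [h, Ne.symm h]
  | [], [] => rfl
  | [], _ :: _ => rfl
  | _ :: _, [] => rfl

theorem lgc_self : ∀ A : List Bool, lgc A A = A.length
  | [] => rfl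
  | a :: as => by simp [lgc, lgc_self as]

theorem lgc_min : ∀ A B C : List Bool, min (lgc A B) (lgc B C) ≤ lgc A C
  | a :: as, b :: bs, c :: cs => by
    unfold lgc
    rcases eq_or_ne a b with hab | hab
    · rcases eq_or_ne b c with hbc | hbc
      · have := lgc_min as bs cs
        simp [hab, hbc, hab.trans hbc]
        omega
      · simp [hbc]
    · simp [hab]
  | [], _, _ => by simp [lgc]
  | _ :: _, [], _ => by simp [lgc]
  | _ :: _, _ :: _, [] => by simp [lgc]

theorem lgc_ge : ∀ (A B : List Bool) (c : ℕ), c ≤ A.length → c ≤ B.length →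
    (∀ j < c, A[j]? = B[j]?) → c ≤ lgc A B
  | _, _, 0, _, _, _ => Nat.zero_le _
  | a :: as, b :: bs, c + 1, hA, hB, h => by
    have hab : a = b := by have := h 0 (Nat.succ_pos _); simpa using this
    have : c ≤ lgc as bs := by
      refine lgc_ge as bs c (by simpa using hA) (by simpa using hB) ?_
      intro j hj
      have := h (j + 1) (by omega)
      simpa using this
    simp [lgc, hab]; omega
  | [], _, c + 1, hA, _, _ => by simp at hA
  | _ :: _, [], c + 1, _, hB, _ => by simp at hB

theorem lgc_agree : ∀ (A B : List Bool) (j : ℕ), j < lgc A B → A[j]? = B[j]?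
  | a :: as, b :: bs, j, hj => by
    by_cases hab : a = b
    · cases j with
      | zero => simp [hab]
      | succ j =>
        have hj' : j < lgc as bs := by simp [lgc, hab] at hj; omega
        simpa using lgc_agree as bs j hj'
    · simp [lgc, hab] at hj
  | [], _, j, hj => by simp [lgc] at hj
  | _ :: _, [], j, hj => by simp [lgc] at hj

/-! treeDist lemmas -/

theorem treeDist_self (A : List Bool) : treeDist A A = 0 := by
  simp [treeDist, lgc_self]; omega

theorem treeDist_comm (A B : List Bool) : treeDist A B = treeDist B A := by
  simp [treeDist, lgc_comm A B]; omega

theorem treeDist_triangle (A B C : List Bool) :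
    treeDist A C ≤ treeDist A B + treeDist B C := by
  have h1 := lgc_le_left A B
  have h2 := lgc_le_right A B
  have h3 := lgc_le_left B C
  have h4 := lgc_le_right B C
  have h5 := lgc_min A B C
  have h6 := lgc_le_left A C
  have h7 := lgc_le_right A C
  simp [treeDist]
  omega

theorem treeDist_le_of_agree (A B : List Bool) (c : ℕ) (hA : c ≤ A.length)
    (hB : c ≤ B.length) (h : ∀ j < c, A[j]? = B[j]?) :
    treeDist A B ≤ A.length + B.length - 2 * c := by
  have := lgc_ge A B c hA hB h
  simp [treeDist]
  omega

theorem treeDist_le_add (A B : List Bool) : treeDist A B ≤ A.length + B.length :=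
  Nat.sub_le _ _
/-! ZMod and generator computation lemmas -/

theorem zmod_cast_inj {n : ℕ} (hn : 0 < n) {a b : ℕ} (ha : a < n) (hb : b < n)
    (h : (a : ZMod n) = (b : ZMod n)) : a = b := by
  have := congrArg ZMod.val h
  rwa [ZMod.val_cast_of_lt ha, ZMod.val_cast_of_lt hb] at this

theorem lampMul_t {n : ℕ} (x : Set (ZMod n)) (k : ZMod n) :
    lampMul (x, k) (lampT n) = (x, k + 1) := by
  simp [lampMul, lampT]

theorem lampTA_eq (n : ℕ) : lampTA n = ({1}, 1) := by
  simp [lampTA, lampMul, lampT, lampA]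

theorem lampMul_ta {n : ℕ} (x : Set (ZMod n)) (k : ZMod n) :
    lampMul (x, k) (lampTA n) = (x ∆ {k + 1}, k + 1) := by
  simp [lampTA_eq, lampMul]

theorem lampInv_t (n : ℕ) : lampInv (lampT n) = (∅, -1) := by
  simp [lampInv, lampT]

theorem lampInv_ta (n : ℕ) : lampInv (lampTA n) = ({0}, -1) := by
  simp [lampTA_eq, lampInv]

theorem lampMul_tinv {n : ℕ} (x : Set (ZMod n)) (k : ZMod n) :
    lampMul (x, k) (lampInv (lampT n)) = (x, k - 1) := by
  simp [lampInv_t, lampMul, sub_eq_add_neg]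

theorem lampMul_tainv {n : ℕ} (x : Set (ZMod n)) (k : ZMod n) :
    lampMul (x, k) (lampInv (lampTA n)) = (x ∆ {k}, k - 1) := by
  simp [lampInv_ta, lampMul, sub_eq_add_neg]
/-! phi1 entries and the one-step bound -/

theorem phi1_fst_len (n : ℕ) (x : Set (ZMod n)) (k : ZMod n) :
    (phi1 n (x, k)).1.length = k.val := by simp [phi1]

theorem phi1_snd_len (n : ℕ) (x : Set (ZMod n)) (k : ZMod n) :
    (phi1 n (x, k)).2.length = n - k.val := by simp [phi1]

theorem phi1_fst_agree (n : ℕ) (x x' : Set (ZMod n)) (k k' : ZMod n) (j : ℕ)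
    (hj : j < k.val) (hj' : j < k'.val)
    (h : (((j : ℕ) : ZMod n) ∈ x ↔ ((j : ℕ) : ZMod n) ∈ x')) :
    (phi1 n (x, k)).1[j]? = (phi1 n (x', k')).1[j]? := by
  classical
  simp only [phi1, List.getElem?_map, List.getElem?_range hj, List.getElem?_range hj', Option.map_some]
  exact congrArg some (if_congr h rfl rfl)

theorem phi1_snd_agree (n : ℕ) (x x' : Set (ZMod n)) (k k' : ZMod n) (i : ℕ)
    (hi : i < n - k.val) (hi' : i < n - k'.val)
    (h : (((n - 1 - i : ℕ) : ZMod n) ∈ x ↔ ((n - 1 - i : ℕ) : ZMod n) ∈ x')) :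
    (phi1 n (x, k)).2[i]? = (phi1 n (x', k')).2[i]? := by
  classical
  simp only [phi1, List.getElem?_map, List.getElem?_range hi, List.getElem?_range hi', Option.map_some]
  exact congrArg some (if_congr h rfl rfl)

theorem stepD (n : ℕ) (x x' : Set (ZMod n)) (K : ℕ) (hK : K + 1 < n)
    (hx : ∀ j : ℕ, j < n → j ≠ K + 1 → (((j : ℕ) : ZMod n) ∈ x ↔ ((j : ℕ) : ZMod n) ∈ x')) :
    treeDist (phi1 n (x, (K : ZMod n))).1 (phi1 n (x', ((K + 1 : ℕ) : ZMod n))).1 ≤ 1 ∧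
    treeDist (phi1 n (x, (K : ZMod n))).2 (phi1 n (x', ((K + 1 : ℕ) : ZMod n))).2 ≤ 3 := by
  have hvK : ((K : ZMod n)).val = K := ZMod.val_cast_of_lt (by omega)
  have hvK1 : (((K + 1 : ℕ) : ZMod n)).val = K + 1 := ZMod.val_cast_of_lt hK
  constructor
  · have h := treeDist_le_of_agree (phi1 n (x, (K : ZMod n))).1
      (phi1 n (x', ((K + 1 : ℕ) : ZMod n))).1 K
      (by rw [phi1_fst_len, hvK]) (by rw [phi1_fst_len, hvK1]; omega) ?_
    · rw [phi1_fst_len, phi1_fst_len, hvK, hvK1] at h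
      omega
    · intro j hj
      exact phi1_fst_agree n x x' _ _ j (by omega) (by omega) (hx j (by omega) (by omega))
  · have h := treeDist_le_of_agree (phi1 n (x, (K : ZMod n))).2
      (phi1 n (x', ((K + 1 : ℕ) : ZMod n))).2 (n - K - 2)
      (by rw [phi1_snd_len, hvK]; omega) (by rw [phi1_snd_len, hvK1]; omega) ?_
    · rw [phi1_snd_len, phi1_snd_len, hvK, hvK1] at h
      omega
    · intro i hi
      exact phi1_snd_agree n x x' _ _ i (by omega) (by omega)
        (hx (n - 1 - i) (by omega) (by omega))
/-! circle distance -/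

def cdist {n : ℕ} (a b : ZMod n) : ℕ := min (b - a).val (a - b).val

theorem cdist_comm {n : ℕ} (a b : ZMod n) : cdist a b = cdist b a := by
  simp [cdist, Nat.min_comm]

theorem cdist_self {n : ℕ} [NeZero n] (a : ZMod n) : cdist a a = 0 := by
  simp [cdist]

theorem zmod_val_one_le (n : ℕ) : (1 : ZMod n).val ≤ 1 := by
  rcases n with _ | _ | n
  · simp [ZMod.val]
  · have := ZMod.val_lt (1 : ZMod 1); omega
  · haveI : Fact (1 < n + 2) := ⟨by omega⟩
    rw [ZMod.val_one]

theorem zmod_sub_one_val {n : ℕ} [NeZero n] (c : ZMod n) (hc : c ≠ 0) :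
    (c - 1).val = c.val - 1 := by
  have h1 : 1 ≤ c.val := Nat.one_le_iff_ne_zero.mpr (fun h => hc (by
    have := ZMod.natCast_rightInverse (n := n) c
    rw [← this, h]; simp))
  have hlt : c.val < n := ZMod.val_lt c
  have : (c - 1) = ((c.val - 1 : ℕ) : ZMod n) := by
    have hc' : ((c.val : ℕ) : ZMod n) = c := ZMod.natCast_rightInverse c
    rw [Nat.cast_sub h1, hc', Nat.cast_one]
  rw [this, ZMod.val_cast_of_lt (by omega)]

theorem cdist_add_one {n : ℕ} [NeZero n] (a b : ZMod n) :
    cdist a (b + 1) ≤ cdist a b + 1 := by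
  rcases min_cases ((b - a).val) ((a - b).val) with ⟨hmin, hle⟩ | ⟨hmin, hle⟩
  · calc cdist a (b + 1) ≤ (b + 1 - a).val := min_le_left _ _
      _ ≤ (b - a).val + (1 : ZMod n).val := by
          rw [show b + 1 - a = (b - a) + 1 by ring]; exact ZMod.val_add_le _ _
      _ ≤ cdist a b + 1 := by rw [cdist, hmin]; have := zmod_val_one_le n; omega
  · rcases eq_or_ne (a - b) 0 with h0 | h0
    · have hab : a = b := by rwa [sub_eq_zero] at h0
      subst hab
      calc cdist a (a + 1) ≤ (a + 1 - a).val := min_le_left _ _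
        _ ≤ 1 := by rw [show a + 1 - a = 1 by ring]; exact zmod_val_one_le n
        _ ≤ cdist a a + 1 := by omega
    · calc cdist a (b + 1) ≤ (a - (b + 1)).val := min_le_right _ _
        _ = (a - b).val - 1 := by
            rw [show a - (b + 1) = (a - b) - 1 by ring]; exact zmod_sub_one_val _ h0
        _ ≤ cdist a b + 1 := by rw [cdist, hmin]; omega

theorem cdist_sub_one {n : ℕ} [NeZero n] (a b : ZMod n) :
    cdist a (b - 1) ≤ cdist a b + 1 := by
  rcases min_cases ((b - a).val) ((a - b).val) with ⟨hmin, hle⟩ | ⟨hmin, hle⟩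
  · rcases eq_or_ne (b - a) 0 with h0 | h0
    · have hab : b = a := by rwa [sub_eq_zero] at h0
      subst hab
      calc cdist b (b - 1) ≤ (b - (b - 1)).val := min_le_right _ _
        _ ≤ 1 := by
            rw [show b - (b - 1) = 1 by ring]
            exact zmod_val_one_le n
        _ ≤ cdist b b + 1 := by omega
    · calc cdist a (b - 1) ≤ (b - 1 - a).val := min_le_left _ _
        _ = (b - a).val - 1 := by
            rw [show b - 1 - a = (b - a) - 1 by ring]; exact zmod_sub_one_val _ h0
        _ ≤ cdist a b + 1 := by rw [cdist, hmin]; omega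
  · calc cdist a (b - 1) ≤ (a - (b - 1)).val := min_le_right _ _
      _ ≤ (a - b).val + (1 : ZMod n).val := by
          rw [show a - (b - 1) = (a - b) + 1 by ring]; exact ZMod.val_add_le _ _
      _ ≤ cdist a b + 1 := by rw [cdist, hmin]; have := zmod_val_one_le n; omega

/-- Valid generator words -/
def validWord (n : ℕ) (w : List (Lamp n)) : Prop :=
  ∀ s ∈ w, s ∈ ({lampT n, lampTA n} : Set (Lamp n)) ∨
    ∃ g ∈ ({lampT n, lampTA n} : Set (Lamp n)), s = lampInv g

theorem gen_cases {n : ℕ} {s : Lamp n}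
    (hs : s ∈ ({lampT n, lampTA n} : Set (Lamp n)) ∨
      ∃ g ∈ ({lampT n, lampTA n} : Set (Lamp n)), s = lampInv g) :
    s = lampT n ∨ s = lampTA n ∨ s = lampInv (lampT n) ∨ s = lampInv (lampTA n) := by
  rcases hs with h | ⟨g, hg, rfl⟩
  · rcases h with h | h
    · exact Or.inl h
    · exact Or.inr (Or.inl h)
  · rcases hg with h | h <;> subst h
    · exact Or.inr (Or.inr (Or.inl rfl))
    · exact Or.inr (Or.inr (Or.inr rfl))

theorem walk_pos {n : ℕ} [NeZero n] :
    ∀ (w : List (Lamp n)), validWord n w → ∀ (u : Lamp n) (a : ZMod n),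
      cdist a (w.foldl lampMul u).2 ≤ cdist a u.2 + w.length := by
  intro w
  induction w with
  | nil => intro _ u a; simp
  | cons s w ih =>
    intro hv u a
    have hs := gen_cases (hv s (by simp))
    have hv' : validWord n w := fun t ht => hv t (by simp [ht])
    have key : cdist a (lampMul u s).2 ≤ cdist a u.2 + 1 := by
      obtain ⟨xx, kk⟩ := u
      rcases hs with rfl | rfl | rfl | rfl
      · rw [lampMul_t]; exact cdist_add_one a kk
      · rw [lampMul_ta]; exact cdist_add_one a kk
      · rw [lampMul_tinv]; exact cdist_sub_one a kk
      · rw [lampMul_tainv]; exact cdist_sub_one a kk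
    calc cdist a ((s :: w).foldl lampMul u).2
        = cdist a (w.foldl lampMul (lampMul u s)).2 := rfl
      _ ≤ cdist a (lampMul u s).2 + w.length := ih hv' _ a
      _ ≤ cdist a u.2 + (s :: w).length := by simp; omega
/-! lower bound word lemma -/

theorem lower_aux (n : ℕ) [NeZero n] :
    ∀ (w : List (Lamp n)) (u : Lamp n), validWord n w →
    (treeDist (phi1 n u).1 (phi1 n (w.foldl lampMul u)).1 ≤ 3 * w.length ∧
     treeDist (phi1 n u).2 (phi1 n (w.foldl lampMul u)).2 ≤ 3 * w.length) ∨
    (∃ c1 c2 : ZMod n, (c1.val = 0 ∨ c1.val = n - 1) ∧ (c2.val = 0 ∨ c2.val = n - 1) ∧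
      cdist u.2 c1 + 1 + cdist c2 (w.foldl lampMul u).2 ≤ w.length) := by
  intro w
  induction w with
  | nil => intro u _; left; constructor <;> simp [treeDist_self]
  | cons s w ih =>
    intro u hv
    have hs4 := gen_cases (hv s (by simp))
    have hv' : validWord n w := fun t ht => hv t (by simp [ht])
    obtain ⟨xx, kk⟩ := u
    have hKlt : kk.val < n := ZMod.val_lt kk
    have hkk : ((kk.val : ℕ) : ZMod n) = kk := ZMod.natCast_rightInverse kk
    have hn : 0 < n := Nat.pos_of_ne_zero (NeZero.ne n)
    have hcast : ∀ m : ℕ, m = n → ((m : ℕ) : ZMod n) = 0 := by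
      rintro m rfl; exact ZMod.natCast_self m
    have combine : ∀ u' : Lamp n, lampMul (xx, kk) s = u' →
        treeDist (phi1 n (xx, kk)).1 (phi1 n u').1 ≤ 3 →
        treeDist (phi1 n (xx, kk)).2 (phi1 n u').2 ≤ 3 →
        (∀ c : ZMod n, cdist kk c ≤ cdist u'.2 c + 1) →
        (treeDist (phi1 n (xx, kk)).1 (phi1 n ((s :: w).foldl lampMul (xx, kk))).1
            ≤ 3 * (s :: w).length ∧
         treeDist (phi1 n (xx, kk)).2 (phi1 n ((s :: w).foldl lampMul (xx, kk))).2
            ≤ 3 * (s :: w).length) ∨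
        (∃ c1 c2 : ZMod n, (c1.val = 0 ∨ c1.val = n - 1) ∧ (c2.val = 0 ∨ c2.val = n - 1) ∧
          cdist (xx, kk).2 c1 + 1 +
            cdist c2 ((s :: w).foldl lampMul (xx, kk)).2 ≤ (s :: w).length) := by
      intro u' hu' h1 h2 hstep
      have hfold : (s :: w).foldl lampMul (xx, kk) = w.foldl lampMul u' := by
        simp [List.foldl_cons, hu']
      rcases ih u' hv' with ⟨g1, g2⟩ | ⟨c1, c2, hc1, hc2, hsum⟩
      · left
        rw [hfold]
        constructor
        · have := treeDist_triangle (phi1 n (xx, kk)).1 (phi1 n u').1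
            (phi1 n (w.foldl lampMul u')).1
          simp only [List.length_cons]
          omega
        · have := treeDist_triangle (phi1 n (xx, kk)).2 (phi1 n u').2
            (phi1 n (w.foldl lampMul u')).2
          simp only [List.length_cons]
          omega
      · right
        refine ⟨c1, c2, hc1, hc2, ?_⟩
        rw [hfold]
        have := hstep c1
        simp only [List.length_cons]
        omega
    have wrapcase : ∀ u' : Lamp n, lampMul (xx, kk) s = u' →
        (kk.val = 0 ∨ kk.val = n - 1) → (u'.2.val = 0 ∨ u'.2.val = n - 1) →
        (treeDist (phi1 n (xx, kk)).1 (phi1 n ((s :: w).foldl lampMul (xx, kk))).1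
            ≤ 3 * (s :: w).length ∧
         treeDist (phi1 n (xx, kk)).2 (phi1 n ((s :: w).foldl lampMul (xx, kk))).2
            ≤ 3 * (s :: w).length) ∨
        (∃ c1 c2 : ZMod n, (c1.val = 0 ∨ c1.val = n - 1) ∧ (c2.val = 0 ∨ c2.val = n - 1) ∧
          cdist (xx, kk).2 c1 + 1 +
            cdist c2 ((s :: w).foldl lampMul (xx, kk)).2 ≤ (s :: w).length) := by
      intro u' hu' h1 h2
      right
      refine ⟨kk, u'.2, h1, h2, ?_⟩
      have hfold : (s :: w).foldl lampMul (xx, kk) = w.foldl lampMul u' := by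
        simp [List.foldl_cons, hu']
      rw [hfold]
      have := walk_pos w hv' u' u'.2
      rw [cdist_self] at this
      rw [cdist_self]
      simp only [List.length_cons]
      omega
    rcases hs4 with rfl | rfl | rfl | rfl
    · -- s = t
      by_cases hw : kk.val + 1 < n
      · have hstep := stepD n xx xx kk.val hw (fun j _ _ => Iff.rfl)
        rw [hkk] at hstep
        have hc1 : ((kk.val + 1 : ℕ) : ZMod n) = kk + 1 := by push_cast [hkk]; ring
        rw [hc1] at hstep
        refine combine (xx, kk + 1) (lampMul_t xx kk) (by omega) hstep.2 ?_
        intro c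
        have := cdist_sub_one c (kk + 1)
        simp only [add_sub_cancel_right] at this
        rw [cdist_comm kk c, cdist_comm (kk + 1) c]
        exact this
      · have hK : kk.val = n - 1 := by omega
        have hval : (kk + 1).val = 0 := by
          have : kk + 1 = 0 := by
            rw [← hkk, hK, show ((n - 1 : ℕ) : ZMod n) = ((n : ℕ) : ZMod n) - 1 from by
              rw [Nat.cast_sub (by omega), Nat.cast_one], ZMod.natCast_self]
            ring
          rw [this, ZMod.val_zero]
        exact wrapcase (xx, kk + 1) (lampMul_t xx kk) (Or.inr hK) (Or.inl hval)
    · -- s = ta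
      by_cases hw : kk.val + 1 < n
      · have hne : ∀ j : ℕ, j < n → j ≠ kk.val + 1 → ((j : ℕ) : ZMod n) ≠ kk + 1 := by
          intro j hj hjne heq
          have hc1 : ((kk.val + 1 : ℕ) : ZMod n) = kk + 1 := by push_cast [hkk]; ring
          exact hjne (zmod_cast_inj hn hj hw (by rw [hc1]; exact heq))
        have hstep := stepD n xx (xx ∆ {kk + 1}) kk.val hw (by
          intro j hj hjne
          have := hne j hj hjne
          simp [Set.mem_symmDiff, this])
        rw [hkk] at hstep
        have hc1 : ((kk.val + 1 : ℕ) : ZMod n) = kk + 1 := by push_cast [hkk]; ring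
        rw [hc1] at hstep
        refine combine (xx ∆ {kk + 1}, kk + 1) (lampMul_ta xx kk) (by omega) hstep.2 ?_
        intro c
        have := cdist_sub_one c (kk + 1)
        simp only [add_sub_cancel_right] at this
        rw [cdist_comm kk c, cdist_comm (kk + 1) c]
        exact this
      · have hK : kk.val = n - 1 := by omega
        have hval : (kk + 1).val = 0 := by
          have : kk + 1 = 0 := by
            rw [← hkk, hK, show ((n - 1 : ℕ) : ZMod n) = ((n : ℕ) : ZMod n) - 1 from by
              rw [Nat.cast_sub (by omega), Nat.cast_one], ZMod.natCast_self]
            ring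
          rw [this, ZMod.val_zero]
        exact wrapcase (xx ∆ {kk + 1}, kk + 1) (lampMul_ta xx kk) (Or.inr hK) (Or.inl hval)
    · -- s = t⁻¹
      by_cases hw : 1 ≤ kk.val
      · obtain ⟨K', hK'⟩ : ∃ K', kk.val = K' + 1 := ⟨kk.val - 1, by omega⟩
        have hstep := stepD n xx xx K' (by omega) (fun j _ _ => Iff.rfl)
        have hcK : ((K' + 1 : ℕ) : ZMod n) = kk := by rw [← hK', hkk]
        have hcK' : ((K' : ℕ) : ZMod n) = kk - 1 := by
          have : ((K' : ℕ) : ZMod n) + 1 = kk := by push_cast at hcK ⊢; exact hcK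
          linear_combination this
        rw [hcK, hcK'] at hstep
        refine combine (xx, kk - 1) (lampMul_tinv xx kk) ?_ ?_ ?_
        · rw [treeDist_comm]; omega
        · rw [treeDist_comm]; exact hstep.2
        · intro c
          have := cdist_add_one c (kk - 1)
          simp only [sub_add_cancel] at this
          rw [cdist_comm kk c, cdist_comm (kk - 1) c]
          exact this
      · have hK : kk.val = 0 := by omega
        have hval : (kk - 1).val = n - 1 := by
          have hkk0 : kk = 0 := by rw [← hkk, hK, Nat.cast_zero]
          have : kk - 1 = ((n - 1 : ℕ) : ZMod n) := by
            have h0 : ((n - 1 : ℕ) : ZMod n) + 1 = 0 := by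
              rw [show ((n - 1 : ℕ) : ZMod n) = ((n : ℕ) : ZMod n) - 1 from by
                rw [Nat.cast_sub (by omega), Nat.cast_one], ZMod.natCast_self]
              ring
            rw [hkk0]
            linear_combination -h0
          rw [this, ZMod.val_cast_of_lt (by omega)]
        exact wrapcase (xx, kk - 1) (lampMul_tinv xx kk) (Or.inl hK) (Or.inr hval)
    · -- s = (ta)⁻¹
      by_cases hw : 1 ≤ kk.val
      · obtain ⟨K', hK'⟩ : ∃ K', kk.val = K' + 1 := ⟨kk.val - 1, by omega⟩
        have hne : ∀ j : ℕ, j < n → j ≠ K' + 1 → ((j : ℕ) : ZMod n) ≠ kk := by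
          intro j hj hjne heq
          exact hjne (by rw [← hK']; exact zmod_cast_inj hn hj hKlt (by rw [hkk]; exact heq))
        have hstep := stepD n (xx ∆ {kk}) xx K' (by omega) (by
          intro j hj hjne
          have := hne j hj hjne
          simp [Set.mem_symmDiff, this])
        have hcK : ((K' + 1 : ℕ) : ZMod n) = kk := by rw [← hK', hkk]
        have hcK' : ((K' : ℕ) : ZMod n) = kk - 1 := by
          have : ((K' : ℕ) : ZMod n) + 1 = kk := by push_cast at hcK ⊢; exact hcK
          linear_combination this
        rw [hcK, hcK'] at hstep
        refine combine (xx ∆ {kk}, kk - 1) (lampMul_tainv xx kk) ?_ ?_ ?_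
        · rw [treeDist_comm]; omega
        · rw [treeDist_comm]; exact hstep.2
        · intro c
          have := cdist_add_one c (kk - 1)
          simp only [sub_add_cancel] at this
          rw [cdist_comm kk c, cdist_comm (kk - 1) c]
          exact this
      · have hK : kk.val = 0 := by omega
        have hval : (kk - 1).val = n - 1 := by
          have hkk0 : kk = 0 := by rw [← hkk, hK, Nat.cast_zero]
          have : kk - 1 = ((n - 1 : ℕ) : ZMod n) := by
            have h0 : ((n - 1 : ℕ) : ZMod n) + 1 = 0 := by
              rw [show ((n - 1 : ℕ) : ZMod n) = ((n : ℕ) : ZMod n) - 1 from by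
                rw [Nat.cast_sub (by omega), Nat.cast_one], ZMod.natCast_self]
              ring
            rw [hkk0]
            linear_combination -h0
          rw [this, ZMod.val_cast_of_lt (by omega)]
        exact wrapcase (xx ∆ {kk}, kk - 1) (lampMul_tainv xx kk) (Or.inl hK) (Or.inr hval)
/-! sweep words -/

theorem symmDiff_insert' {α : Type*} (x T : Set α) (w : α) (hw : w ∉ T) :
    (x ∆ T) ∆ {w} = x ∆ (T ∪ {w}) := by
  rw [symmDiff_assoc]
  congr 1
  ext z
  by_cases hz : z = w
  · subst hz; simp [Set.mem_symmDiff, hw]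
  · simp [Set.mem_symmDiff, hz, Set.mem_singleton_iff]

theorem symmDiff_empty' {α : Type*} (x : Set α) : x ∆ (∅ : Set α) = x := by
  rw [show (∅ : Set α) = ⊥ from rfl, symmDiff_bot]

open Classical in
noncomputable def upW (n : ℕ) (S : Set (ZMod n)) (a c : ℕ) : List (Lamp n) :=
  (List.range c).map fun i => if ((a + i + 1 : ℕ) : ZMod n) ∈ S then lampTA n else lampT n

def upT (n : ℕ) (S : Set (ZMod n)) (a c : ℕ) : Set (ZMod n) :=
  {z | z ∈ S ∧ ∃ i < c, z = ((a + i + 1 : ℕ) : ZMod n)}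

open Classical in
noncomputable def dnW (n : ℕ) (S : Set (ZMod n)) (b c : ℕ) : List (Lamp n) :=
  (List.range c).map fun i => if ((b - i : ℕ) : ZMod n) ∈ S then lampInv (lampTA n) else lampInv (lampT n)

def dnT (n : ℕ) (S : Set (ZMod n)) (b c : ℕ) : Set (ZMod n) :=
  {z | z ∈ S ∧ ∃ i < c, z = ((b - i : ℕ) : ZMod n)}

open Classical in
noncomputable def dipW (n : ℕ) (S : Set (ZMod n)) (p : ZMod n) : List (Lamp n) :=
  [lampInv (lampT n), if p ∈ S then lampTA n else lampT n]

def dipT (n : ℕ) (S : Set (ZMod n)) (p : ZMod n) : Set (ZMod n) :=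
  {z | z ∈ S ∧ z = p}

theorem upW_valid (n : ℕ) (S : Set (ZMod n)) (a c : ℕ) : validWord n (upW n S a c) := by
  intro s hs
  simp only [upW, List.mem_map, List.mem_range] at hs
  obtain ⟨i, _, rfl⟩ := hs
  split
  · exact Or.inl (by simp)
  · exact Or.inl (by simp)

theorem dnW_valid (n : ℕ) (S : Set (ZMod n)) (b c : ℕ) : validWord n (dnW n S b c) := by
  intro s hs
  simp only [dnW, List.mem_map, List.mem_range] at hs
  obtain ⟨i, _, rfl⟩ := hs
  split
  · exact Or.inr ⟨lampTA n, by simp, rfl⟩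
  · exact Or.inr ⟨lampT n, by simp, rfl⟩

theorem dipW_valid (n : ℕ) (S : Set (ZMod n)) (p : ZMod n) : validWord n (dipW n S p) := by
  intro s hs
  simp only [dipW, List.mem_cons, List.not_mem_nil, or_false] at hs
  rcases hs with rfl | rfl
  · exact Or.inr ⟨lampT n, by simp, rfl⟩
  · split
    · exact Or.inl (by simp)
    · exact Or.inl (by simp)

theorem validWord_append {n : ℕ} {w1 w2 : List (Lamp n)} (h1 : validWord n w1)
    (h2 : validWord n w2) : validWord n (w1 ++ w2) := by
  intro s hs
  rcases List.mem_append.mp hs with h | h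
  · exact h1 s h
  · exact h2 s h

theorem upW_foldl (n : ℕ) [NeZero n] (S x : Set (ZMod n)) (a c : ℕ) (h : a + c < n) :
    List.foldl lampMul (x, ((a : ℕ) : ZMod n)) (upW n S a c)
      = (x ∆ upT n S a c, ((a + c : ℕ) : ZMod n)) := by
  classical
  induction c with
  | zero =>
    have : upT n S a 0 = ∅ := by ext z; simp [upT]
    simp [upW, this, symmDiff_empty']
  | succ c ihc =>
    have hac : a + c < n := by omega
    have hstep : upW n S a (c + 1) = upW n S a c ++
        [if ((a + c + 1 : ℕ) : ZMod n) ∈ S then lampTA n else lampT n] := by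
      rw [upW, upW, List.range_succ, List.map_append]
      rfl
    rw [hstep, List.foldl_append, ihc hac]
    have hpos : ((a + c : ℕ) : ZMod n) + 1 = ((a + c + 1 : ℕ) : ZMod n) := by push_cast; ring
    by_cases hmem : ((a + c + 1 : ℕ) : ZMod n) ∈ S
    · simp only [hmem, if_pos, List.foldl_cons, List.foldl_nil, lampMul_ta]
      rw [hpos]
      have hw : ((a + c + 1 : ℕ) : ZMod n) ∉ upT n S a c := by
        rintro ⟨-, i, hi, hz⟩
        have := zmod_cast_inj (Nat.pos_of_ne_zero (NeZero.ne n)) h (by omega) hz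
        omega
      rw [symmDiff_insert' x _ _ hw]
      congr 2
      ext z
      simp only [upT, Set.mem_union, Set.mem_setOf_eq, Set.mem_singleton_iff]
      constructor
      · rintro (⟨hzS, i, hi, rfl⟩ | rfl)
        · exact ⟨hzS, i, by omega, rfl⟩
        · exact ⟨hmem, c, by omega, rfl⟩
      · rintro ⟨hzS, i, hi, rfl⟩
        rcases Nat.lt_succ_iff_lt_or_eq.mp hi with hi' | rfl
        · exact Or.inl ⟨hzS, i, hi', rfl⟩
        · exact Or.inr rfl
    · simp only [hmem, if_neg, not_false_iff, List.foldl_cons, List.foldl_nil, lampMul_t]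
      rw [hpos]
      congr 2
      ext z
      simp only [upT, Set.mem_setOf_eq]
      constructor
      · rintro ⟨hzS, i, hi, rfl⟩
        exact ⟨hzS, i, by omega, rfl⟩
      · rintro ⟨hzS, i, hi, rfl⟩
        rcases Nat.lt_succ_iff_lt_or_eq.mp hi with hi' | rfl
        · exact ⟨hzS, i, hi', rfl⟩
        · exact absurd hzS hmem

theorem dnW_foldl (n : ℕ) [NeZero n] (S x : Set (ZMod n)) (b c : ℕ) (hb : b < n) (hc : c ≤ b) :
    List.foldl lampMul (x, ((b : ℕ) : ZMod n)) (dnW n S b c)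
      = (x ∆ dnT n S b c, ((b - c : ℕ) : ZMod n)) := by
  classical
  induction c with
  | zero =>
    have : dnT n S b 0 = ∅ := by ext z; simp [dnT]
    simp [dnW, this, symmDiff_empty']
  | succ c ihc =>
    have hc' : c ≤ b := by omega
    have hstep : dnW n S b (c + 1) = dnW n S b c ++
        [if ((b - c : ℕ) : ZMod n) ∈ S then lampInv (lampTA n) else lampInv (lampT n)] := by
      rw [dnW, dnW, List.range_succ, List.map_append]
      rfl
    rw [hstep, List.foldl_append, ihc hc']
    have hpos : ((b - c : ℕ) : ZMod n) - 1 = ((b - (c + 1) : ℕ) : ZMod n) := by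
      have h1 : 1 ≤ b - c := by omega
      rw [show b - (c + 1) = (b - c) - 1 by omega, Nat.cast_sub h1, Nat.cast_one]
    by_cases hmem : ((b - c : ℕ) : ZMod n) ∈ S
    · simp only [hmem, if_pos, List.foldl_cons, List.foldl_nil, lampMul_tainv]
      rw [hpos]
      have hw : ((b - c : ℕ) : ZMod n) ∉ dnT n S b c := by
        rintro ⟨-, i, hi, hz⟩
        have := zmod_cast_inj (Nat.pos_of_ne_zero (NeZero.ne n)) (by omega) (by omega) hz
        omega
      rw [symmDiff_insert' x _ _ hw]
      congr 2
      ext z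
      simp only [dnT, Set.mem_union, Set.mem_setOf_eq, Set.mem_singleton_iff]
      constructor
      · rintro (⟨hzS, i, hi, rfl⟩ | rfl)
        · exact ⟨hzS, i, by omega, rfl⟩
        · exact ⟨hmem, c, by omega, rfl⟩
      · rintro ⟨hzS, i, hi, rfl⟩
        rcases Nat.lt_succ_iff_lt_or_eq.mp hi with hi' | rfl
        · exact Or.inl ⟨hzS, i, hi', rfl⟩
        · exact Or.inr rfl
    · simp only [hmem, if_neg, not_false_iff, List.foldl_cons, List.foldl_nil, lampMul_tinv]
      rw [hpos]
      congr 2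
      ext z
      simp only [dnT, Set.mem_setOf_eq]
      constructor
      · rintro ⟨hzS, i, hi, rfl⟩
        exact ⟨hzS, i, by omega, rfl⟩
      · rintro ⟨hzS, i, hi, rfl⟩
        rcases Nat.lt_succ_iff_lt_or_eq.mp hi with hi' | rfl
        · exact ⟨hzS, i, hi', rfl⟩
        · exact absurd hzS hmem

theorem dipW_foldl (n : ℕ) (S x : Set (ZMod n)) (p : ZMod n) :
    List.foldl lampMul (x, p) (dipW n S p) = (x ∆ dipT n S p, p) := by
  classical
  by_cases hp : p ∈ S
  · have hT : dipT n S p = {p} := by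
      ext z
      simp only [dipT, Set.mem_setOf_eq, Set.mem_singleton_iff]
      exact ⟨fun h => h.2, fun h => ⟨h ▸ hp, h⟩⟩
    simp only [dipW, hp, if_pos, List.foldl_cons, List.foldl_nil, lampMul_tinv, lampMul_ta,
      sub_add_cancel, hT]
  · have hT : dipT n S p = ∅ := by
      ext z
      simp only [dipT, Set.mem_setOf_eq, Set.mem_empty_iff_false, iff_false, not_and]
      rintro h rfl
      exact hp h
    simp only [dipW, hp, if_neg, not_false_iff, List.foldl_cons, List.foldl_nil, lampMul_tinv,
      lampMul_t, sub_add_cancel, hT, symmDiff_empty']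
/-! upper bound -/

theorem iff_of_ite_eq {c d : Prop} [Decidable c] [Decidable d]
    (h : (if c then true else false) = (if d then true else false)) : c ↔ d := by
  by_cases hc : c <;> by_cases hd : d <;> simp [hc, hd] at h ⊢

open Classical in
theorem phi1_fst_get (n : ℕ) (x : Set (ZMod n)) (k : ZMod n) (j : ℕ) (hj : j < k.val) :
    (phi1 n (x, k)).1[j]? = some (if ((j : ℕ) : ZMod n) ∈ x then true else false) := by
  simp only [phi1, List.getElem?_map, List.getElem?_range hj, Option.map_some]

open Classical in
theorem phi1_snd_get (n : ℕ) (x : Set (ZMod n)) (k : ZMod n) (i : ℕ) (hi : i < n - k.val) :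
    (phi1 n (x, k)).2[i]? =
      some (if ((n - 1 - i : ℕ) : ZMod n) ∈ x then true else false) := by
  simp only [phi1, List.getElem?_map, List.getElem?_range hi, Option.map_some]

theorem band (n : ℕ) [NeZero n] (x y : Set (ZMod n)) (k l : ZMod n) (z : ZMod n)
    (hz : z ∈ x ∆ y) :
    lgc (phi1 n (x, k)).1 (phi1 n (y, l)).1 ≤ z.val ∧
    z.val ≤ n - 1 - lgc (phi1 n (x, k)).2 (phi1 n (y, l)).2 := by
  classical
  have hzval : ((z.val : ℕ) : ZMod n) = z := ZMod.natCast_rightInverse z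
  have hzlt : z.val < n := ZMod.val_lt z
  have hmem : ¬ (z ∈ x ↔ z ∈ y) := by
    rw [Set.mem_symmDiff] at hz
    tauto
  set p := lgc (phi1 n (x, k)).1 (phi1 n (y, l)).1 with hp
  set q := lgc (phi1 n (x, k)).2 (phi1 n (y, l)).2 with hq
  have hpK : p ≤ k.val := by
    have := lgc_le_left (phi1 n (x, k)).1 (phi1 n (y, l)).1
    rwa [phi1_fst_len] at this
  have hpL : p ≤ l.val := by
    have := lgc_le_right (phi1 n (x, k)).1 (phi1 n (y, l)).1
    rwa [phi1_fst_len] at this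
  have hqK : q ≤ n - k.val := by
    have := lgc_le_left (phi1 n (x, k)).2 (phi1 n (y, l)).2
    rwa [phi1_snd_len] at this
  have hqL : q ≤ n - l.val := by
    have := lgc_le_right (phi1 n (x, k)).2 (phi1 n (y, l)).2
    rwa [phi1_snd_len] at this
  constructor
  · by_contra hlt
    push_neg at hlt
    have hagree := lgc_agree (phi1 n (x, k)).1 (phi1 n (y, l)).1 z.val hlt
    rw [phi1_fst_get n x k z.val (by omega), phi1_fst_get n y l z.val (by omega)] at hagree
    have := iff_of_ite_eq (Option.some.inj hagree)
    rw [hzval] at this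
    exact hmem this
  · by_contra hlt
    push_neg at hlt
    have hi : n - 1 - z.val < q := by omega
    have hagree := lgc_agree (phi1 n (x, k)).2 (phi1 n (y, l)).2 (n - 1 - z.val) hi
    rw [phi1_snd_get n x k _ (by omega), phi1_snd_get n y l _ (by omega)] at hagree
    have := iff_of_ite_eq (Option.some.inj hagree)
    rw [show n - 1 - (n - 1 - z.val) = z.val by omega, hzval] at this
    exact hmem this

theorem upT_empty (n : ℕ) (a c : ℕ) : upT n (∅ : Set (ZMod n)) a c = ∅ := by
  ext z; simp [upT]

theorem dnT_empty (n : ℕ) (b c : ℕ) : dnT n (∅ : Set (ZMod n)) b c = ∅ := by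
  ext z; simp [dnT]

theorem upper (n : ℕ) [NeZero n] (x y : Set (ZMod n)) (k l : ZMod n) :
    ∃ w : List (Lamp n), validWord n w ∧ (y, l) = w.foldl lampMul (x, k) ∧
      w.length ≤ 2 * max (treeDist (phi1 n (x, k)).1 (phi1 n (y, l)).1)
        (treeDist (phi1 n (x, k)).2 (phi1 n (y, l)).2) + 2 := by
  classical
  have hn : 0 < n := Nat.pos_of_ne_zero (NeZero.ne n)
  set S := x ∆ y with hS
  set K := k.val with hK
  set L := l.val with hL
  have hKlt : K < n := ZMod.val_lt k
  have hLlt : L < n := ZMod.val_lt l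
  have hk : ((K : ℕ) : ZMod n) = k := ZMod.natCast_rightInverse k
  have hl : ((L : ℕ) : ZMod n) = l := ZMod.natCast_rightInverse l
  set p := lgc (phi1 n (x, k)).1 (phi1 n (y, l)).1 with hp
  set q := lgc (phi1 n (x, k)).2 (phi1 n (y, l)).2 with hq
  have hpK : p ≤ K := by
    have := lgc_le_left (phi1 n (x, k)).1 (phi1 n (y, l)).1
    rwa [phi1_fst_len] at this
  have hpL : p ≤ L := by
    have := lgc_le_right (phi1 n (x, k)).1 (phi1 n (y, l)).1
    rwa [phi1_fst_len] at this
  have hqK : q ≤ n - K := by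
    have := lgc_le_left (phi1 n (x, k)).2 (phi1 n (y, l)).2
    rwa [phi1_snd_len] at this
  have hqL : q ≤ n - L := by
    have := lgc_le_right (phi1 n (x, k)).2 (phi1 n (y, l)).2
    rwa [phi1_snd_len] at this
  have htd1 : treeDist (phi1 n (x, k)).1 (phi1 n (y, l)).1 = K + L - 2 * p := by
    show (phi1 n (x, k)).1.length + (phi1 n (y, l)).1.length - 2 * p = _
    rw [phi1_fst_len, phi1_fst_len]
  have htd2 : treeDist (phi1 n (x, k)).2 (phi1 n (y, l)).2 = (n - K) + (n - L) - 2 * q := by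
    show (phi1 n (x, k)).2.length + (phi1 n (y, l)).2.length - 2 * q = _
    rw [phi1_snd_len, phi1_snd_len]
  set M := max (treeDist (phi1 n (x, k)).1 (phi1 n (y, l)).1)
    (treeDist (phi1 n (x, k)).2 (phi1 n (y, l)).2) with hM
  have hM1 : K + L - 2 * p ≤ M := htd1 ▸ le_max_left _ _
  have hM2 : (n - K) + (n - L) - 2 * q ≤ M := htd2 ▸ le_max_right _ _
  have hband : ∀ z ∈ S, p ≤ z.val ∧ z.val ≤ n - 1 - q := fun z hz => band n x y k l z hz
  -- the common route pieces
  rcases le_or_gt L K with hKL | hKL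
  · -- route A : K → R → p → L
    set R := max K (n - 1 - q) with hR
    have hRK : K ≤ R := le_max_left _ _
    have hRq : n - 1 - q ≤ R := le_max_right _ _
    have hRlt : R < n := by
      rcases max_choice K (n - 1 - q) with h | h <;> omega
    refine ⟨upW n ∅ K (R - K) ++ dnW n S R (R - p) ++ dipW n S ((p : ℕ) : ZMod n)
      ++ upW n ∅ p (L - p), ?_, ?_, ?_⟩
    · exact validWord_append (validWord_append (validWord_append
        (upW_valid _ _ _ _) (dnW_valid _ _ _ _)) (dipW_valid _ _ _)) (upW_valid _ _ _ _)
    · rw [List.foldl_append, List.foldl_append, List.foldl_append]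
      rw [show (x, k) = (x, ((K : ℕ) : ZMod n)) by rw [hk]]
      rw [upW_foldl n ∅ x K (R - K) (by omega), upT_empty, symmDiff_empty',
        show K + (R - K) = R by omega]
      rw [dnW_foldl n S x R (R - p) hRlt (by omega), show R - (R - p) = p by omega]
      rw [dipW_foldl]
      rw [upW_foldl n ∅ _ p (L - p) (by omega), upT_empty, symmDiff_empty',
        show p + (L - p) = L by omega, hl]
      -- now identify the lamp set
      have hcover : ∀ z ∈ S, z.val = p ∨ (p + 1 ≤ z.val ∧ z.val ≤ R) := by
        intro z hz
        have := hband z hz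
        omega
      have hrepr : ∀ z : ZMod n, ((z.val : ℕ) : ZMod n) = z :=
        fun z => ZMod.natCast_rightInverse z
      by_cases hpS : ((p : ℕ) : ZMod n) ∈ S
      · have hdip : dipT n S ((p : ℕ) : ZMod n) = {((p : ℕ) : ZMod n)} := by
          ext z
          simp only [dipT, Set.mem_setOf_eq, Set.mem_singleton_iff]
          exact ⟨fun h => h.2, fun h => ⟨h ▸ hpS, h⟩⟩
        have hpnot : ((p : ℕ) : ZMod n) ∉ dnT n S R (R - p) := by
          rintro ⟨-, i, hi, hzi⟩
          have := zmod_cast_inj hn (by omega) (by omega) hzi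
          omega
        rw [hdip, symmDiff_insert' x _ _ hpnot]
        have : dnT n S R (R - p) ∪ {((p : ℕ) : ZMod n)} = S := by
          ext z
          simp only [dnT, Set.mem_union, Set.mem_setOf_eq, Set.mem_singleton_iff]
          constructor
          · rintro (⟨hzS, -⟩ | rfl)
            · exact hzS
            · exact hpS
          · intro hzS
            rcases hcover z hzS with h | h
            · right; rw [← hrepr z, h]
            · left
              refine ⟨hzS, R - z.val, by omega, ?_⟩
              rw [show R - (R - z.val) = z.val by omega, hrepr]
        rw [this, hS, symmDiff_symmDiff_cancel_left]
      · have hdip : dipT n S ((p : ℕ) : ZMod n) = ∅ := by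
          ext z
          simp only [dipT, Set.mem_setOf_eq, Set.mem_empty_iff_false, iff_false, not_and]
          rintro h rfl
          exact hpS h
        rw [hdip, symmDiff_empty']
        have : dnT n S R (R - p) = S := by
          ext z
          simp only [dnT, Set.mem_setOf_eq]
          constructor
          · rintro ⟨hzS, -⟩; exact hzS
          · intro hzS
            rcases hcover z hzS with h | h
            · exact absurd hzS (by rw [← hrepr z, h] at hzS ⊢; exact fun _ => hpS hzS)
            · refine ⟨hzS, R - z.val, by omega, ?_⟩
              rw [show R - (R - z.val) = z.val by omega, hrepr]
        rw [this, hS, symmDiff_symmDiff_cancel_left]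
    · simp only [List.length_append, upW, dnW, dipW, List.length_map, List.length_range,
        List.length_cons, List.length_nil]
      rcases max_choice K (n - 1 - q) with h | h <;> omega
  · -- route B : K → p → R → L
    set R := max L (n - 1 - q) with hR
    have hRL : L ≤ R := le_max_left _ _
    have hRq : n - 1 - q ≤ R := le_max_right _ _
    have hRlt : R < n := by
      rcases max_choice L (n - 1 - q) with h | h <;> omega
    refine ⟨dnW n ∅ K (K - p) ++ dipW n S ((p : ℕ) : ZMod n) ++ upW n S p (R - p)
      ++ dnW n ∅ R (R - L), ?_, ?_, ?_⟩
    · exact validWord_append (validWord_append (validWord_append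
        (dnW_valid _ _ _ _) (dipW_valid _ _ _)) (upW_valid _ _ _ _)) (dnW_valid _ _ _ _)
    · rw [List.foldl_append, List.foldl_append, List.foldl_append]
      rw [show (x, k) = (x, ((K : ℕ) : ZMod n)) by rw [hk]]
      rw [dnW_foldl n ∅ x K (K - p) (by omega) (by omega), dnT_empty, symmDiff_empty',
        show K - (K - p) = p by omega]
      rw [dipW_foldl]
      rw [upW_foldl n S _ p (R - p) (by omega), show p + (R - p) = R by omega]
      rw [dnW_foldl n ∅ _ R (R - L) hRlt (by omega), dnT_empty, symmDiff_empty',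
        show R - (R - L) = L by omega, hl]
      have hcover : ∀ z ∈ S, z.val = p ∨ (p + 1 ≤ z.val ∧ z.val ≤ R) := by
        intro z hz
        have := hband z hz
        omega
      have hrepr : ∀ z : ZMod n, ((z.val : ℕ) : ZMod n) = z :=
        fun z => ZMod.natCast_rightInverse z
      have hpnot : ((p : ℕ) : ZMod n) ∉ upT n S p (R - p) := by
        rintro ⟨-, i, hi, hzi⟩
        have := zmod_cast_inj hn (by omega) (by omega) hzi
        omega
      have hup : ∀ z ∈ S, p + 1 ≤ z.val → z.val ≤ R → z ∈ upT n S p (R - p) := by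
        intro z hzS h1 h2
        refine ⟨hzS, z.val - p - 1, by omega, ?_⟩
        rw [show p + (z.val - p - 1) + 1 = z.val by omega, hrepr]
      by_cases hpS : ((p : ℕ) : ZMod n) ∈ S
      · have hdip : dipT n S ((p : ℕ) : ZMod n) = {((p : ℕ) : ZMod n)} := by
          ext z
          simp only [dipT, Set.mem_setOf_eq, Set.mem_singleton_iff]
          exact ⟨fun h => h.2, fun h => ⟨h ▸ hpS, h⟩⟩
        have hswap : x ∆ {((p : ℕ) : ZMod n)} ∆ upT n S p (R - p)
            = x ∆ upT n S p (R - p) ∆ {((p : ℕ) : ZMod n)} := by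
          rw [symmDiff_assoc, symmDiff_assoc, symmDiff_comm ({((p : ℕ) : ZMod n)} : Set (ZMod n))]
        rw [hdip, hswap, symmDiff_insert' x _ _ hpnot]
        have : upT n S p (R - p) ∪ {((p : ℕ) : ZMod n)} = S := by
          ext z
          simp only [Set.mem_union, Set.mem_singleton_iff]
          constructor
          · rintro (⟨hzS, -⟩ | rfl)
            · exact hzS
            · exact hpS
          · intro hzS
            rcases hcover z hzS with h | h
            · right; rw [← hrepr z, h]
            · exact Or.inl (hup z hzS h.1 h.2)
        rw [this, hS, symmDiff_symmDiff_cancel_left]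
      · have hdip : dipT n S ((p : ℕ) : ZMod n) = ∅ := by
          ext z
          simp only [dipT, Set.mem_setOf_eq, Set.mem_empty_iff_false, iff_false, not_and]
          rintro h rfl
          exact hpS h
        rw [hdip, symmDiff_empty']
        have : upT n S p (R - p) = S := by
          ext z
          constructor
          · rintro ⟨hzS, -⟩; exact hzS
          · intro hzS
            rcases hcover z hzS with h | h
            · exact absurd hzS (by rw [← hrepr z, h] at hzS ⊢; exact fun _ => hpS hzS)
            · exact hup z hzS h.1 h.2
        rw [this, hS, symmDiff_symmDiff_cancel_left]
    · simp only [List.length_append, upW, dnW, dipW, List.length_map, List.length_range,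
        List.length_cons, List.length_nil]
      rcases max_choice L (n - 1 - q) with h | h <;> omega

theorem cdist_big (n : ℕ) [NeZero n] (h6 : 6 ∣ n) (a c : ZMod n)
    (ha1 : n / 6 ≤ a.val) (ha2 : a.val ≤ 5 * n / 6)
    (hc : c.val = 0 ∨ c.val = n - 1) : n / 6 - 1 ≤ cdist a c := by
  have hn : 0 < n := Nat.pos_of_ne_zero (NeZero.ne n)
  have hn6 : 6 ≤ n := by
    obtain ⟨m, rfl⟩ := h6
    have : m ≠ 0 := by rintro rfl; omega
    omega
  have halt : a.val < n := ZMod.val_lt a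
  have ha : ((a.val : ℕ) : ZMod n) = a := ZMod.natCast_rightInverse a
  have hcast0 : ((n : ℕ) : ZMod n) = 0 := ZMod.natCast_self n
  rcases hc with hc0 | hc1
  · have hceq : c = 0 := by
      have : ((c.val : ℕ) : ZMod n) = c := ZMod.natCast_rightInverse c
      rw [← this, hc0, Nat.cast_zero]
    subst hceq
    have hna : (0 - a : ZMod n) = ((n - a.val : ℕ) : ZMod n) := by
      have : ((n - a.val : ℕ) : ZMod n) + ((a.val : ℕ) : ZMod n) = 0 := by
        rw [← Nat.cast_add, show n - a.val + a.val = n by omega, hcast0]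
      rw [ha] at this
      linear_combination -this
    have h1 : (0 - a : ZMod n).val = n - a.val := by
      rw [hna, ZMod.val_cast_of_lt (by omega)]
    have h2 : (a - 0 : ZMod n).val = a.val := by rw [sub_zero]
    rw [cdist, h1, h2]
    omega
  · have hceq : c = ((n - 1 : ℕ) : ZMod n) := by
      have : ((c.val : ℕ) : ZMod n) = c := ZMod.natCast_rightInverse c
      rw [← this, hc1]
    subst hceq
    have h1 : (((n - 1 : ℕ) : ZMod n) - a).val = n - 1 - a.val := by
      have : (((n - 1 : ℕ) : ZMod n) - a) = ((n - 1 - a.val : ℕ) : ZMod n) := by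
        rw [Nat.cast_sub (show a.val ≤ n - 1 by omega), ha]
      rw [this, ZMod.val_cast_of_lt (by omega)]
    by_cases hedge : a.val + 1 = n
    · have : n = 6 := by omega
      omega
    · have h2 : (a - ((n - 1 : ℕ) : ZMod n)).val = a.val + 1 := by
        have heq : a - ((n - 1 : ℕ) : ZMod n) = ((a.val + 1 : ℕ) : ZMod n) := by
          have hsum : ((n - 1 : ℕ) : ZMod n) + ((a.val + 1 : ℕ) : ZMod n) = a := by
            rw [← Nat.cast_add, show n - 1 + (a.val + 1) = n + a.val by omega,
              Nat.cast_add, hcast0, ha, zero_add]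
          linear_combination -hsum
        rw [heq, ZMod.val_cast_of_lt (by omega)]
      rw [cdist, h1, h2]
      omega

/-- For `(x,k), (y,l) ∈ P_{1,n}`:
`(1/6)·d_∞(φ(x,k), φ(y,l)) - 2 ≤ ρ((x,k),(y,l)) ≤ 2·d_∞(φ(x,k), φ(y,l)) + 2`,
so the bijections `φ_{1,n} : (P_{1,n}, ρ) → (W_n, d_∞)` have uniformly bounded
distortions. -/
theorem phi1_bilipschitz
    (n : ℕ) (hn : 0 < n) (h6 : 6 ∣ n)
    (x y : Set (ZMod n)) (k l : ZMod n)
    (hxk : ((x, k) : Lamp n) ∈ lampP1 n) (hyl : ((y, l) : Lamp n) ∈ lampP1 n) :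
    (1 / 6 : ℝ) * (max (treeDist (phi1 n (x, k)).1 (phi1 n (y, l)).1)
        (treeDist (phi1 n (x, k)).2 (phi1 n (y, l)).2) : ℝ) - 2 ≤
      (lampDist n (x, k) (y, l) : ℝ) ∧
    (lampDist n (x, k) (y, l) : ℝ) ≤
      2 * (max (treeDist (phi1 n (x, k)).1 (phi1 n (y, l)).1)
        (treeDist (phi1 n (x, k)).2 (phi1 n (y, l)).2) : ℝ) + 2 := by
  haveI : NeZero n := ⟨hn.ne'⟩
  obtain ⟨hk1, hk2⟩ := hxk
  obtain ⟨hl1, hl2⟩ := hyl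
  set td1 := treeDist (phi1 n (x, k)).1 (phi1 n (y, l)).1 with htd1
  set td2 := treeDist (phi1 n (x, k)).2 (phi1 n (y, l)).2 with htd2
  set M := max td1 td2 with hM
  -- upper bound
  obtain ⟨w, hwv, hweq, hwlen⟩ := upper n x y k l
  have hupper : lampDist n (x, k) (y, l) ≤ 2 * M + 2 := by
    refine le_trans (Nat.sInf_le ⟨w, rfl, hwv, hweq⟩) ?_
    exact hwlen
  -- the infimum is attained
  have hne : {m | ∃ w' : List (Lamp n), w'.length = m ∧
      (∀ s ∈ w', s ∈ ({lampT n, lampTA n} : Set (Lamp n)) ∨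
        ∃ g ∈ ({lampT n, lampTA n} : Set (Lamp n)), s = lampInv g) ∧
      (y, l) = w'.foldl lampMul (x, k)}.Nonempty :=
    ⟨w.length, w, rfl, hwv, hweq⟩
  obtain ⟨w0, hlen0, hv0, heq0⟩ := Nat.sInf_mem hne
  have hρ : lampDist n (x, k) (y, l) = w0.length := hlen0.symm
  -- lower bound
  have hlow := lower_aux n w0 (x, k) hv0
  rw [← heq0] at hlow
  have hMlow : M ≤ 6 * w0.length + 12 := by
    rcases hlow with ⟨hg1, hg2⟩ | ⟨c1, c2, hc1, hc2, hsum⟩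
    · simp only [hM]
      exact max_le (by omega) (by omega)
    · have hsum' : cdist k c1 + 1 + cdist c2 l ≤ w0.length := hsum
      clear hsum
      have hKlt : k.val < n := ZMod.val_lt k
      have hLlt : l.val < n := ZMod.val_lt l
      have hb1 : n / 6 - 1 ≤ cdist k c1 := cdist_big n h6 k c1 hk1 hk2 hc1
      have hb2 : n / 6 - 1 ≤ cdist c2 l := by
        rw [cdist_comm]
        exact cdist_big n h6 l c2 hl1 hl2 hc2
      have hT1 : td1 ≤ 2 * n := by
        have := treeDist_le_add (phi1 n (x, k)).1 (phi1 n (y, l)).1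
        rw [phi1_fst_len, phi1_fst_len] at this
        omega
      have hT2 : td2 ≤ 2 * n := by
        have := treeDist_le_add (phi1 n (x, k)).2 (phi1 n (y, l)).2
        rw [phi1_snd_len, phi1_snd_len] at this
        omega
      have hn6 : 6 ≤ n := by
        obtain ⟨m, rfl⟩ := h6
        have : m ≠ 0 := by rintro rfl; omega
        omega
      have h66 : n / 6 * 6 = n := Nat.div_mul_cancel h6
      simp only [hM]
      refine max_le (by omega) (by omega)
  constructor
  · have : (M : ℝ) ≤ 6 * (lampDist n (x, k) (y, l) : ℝ) + 12 := by
      rw [hρ]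
      exact_mod_cast hMlow
    rw [hM] at this
    push_cast at this ⊢
    linarith
  · have : (lampDist n (x, k) (y, l) : ℝ) ≤ 2 * (M : ℝ) + 2 := by
      exact_mod_cast hupper
    rw [hM] at this
    push_cast at this ⊢
    linarith
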